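/- Assume v1 ≠ v2 and let v ∈ ℝ be arbitrary. There do not exist continuously differentiable, nonnegative, Lebesgue-integrable functions f1, f2 : ℝ → ℝ with ∫_ℝ f1 = ∫_ℝ f2 = 1 satisfying (v1 − v)·f1'(x) = α12(f2(x) − f1(x)) and (v2 − v)·f2'(x) = α21(f1(x) − f2(x)) for all x ∈ ℝ. Consequently, the synchronization system ∂_t m1 + v1 ∂_x m1 = α12(m2 − m1), ∂_t m2 + v2 ∂_x m2 = α21(m1 − m2) admits no traveling-wave solution m_i(t,x) = f_i(x − vt) with such profiles f1, f2. -/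

import Mathlib

open MeasureTheory

/-- A constant integrable function on `ℝ` with integral `1` is impossible. -/
lemma const_integrable_false (f : ℝ → ℝ) (hf : Integrable f)
    (hconst : ∀ x, f x = f 0) (hI : (∫ x : ℝ, f x) = 1) : False := by
  have hf' : f = fun _ => f 0 := funext fun x => hconst x
  rw [hf'] at hf hI
  rcases (integrable_const_iff).mp hf with h0 | hfin
  · simp [h0] at hI
  · simp [isFiniteMeasure_iff, Real.volume_univ] at hfin

/-- If `v1 ≠ v2`, then for any `v` there are no `C¹`, nonnegative, integrable
probability-density profiles `f1, f2` satisfying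
`(v1 - v) f1' = α12 (f2 - f1)` and `(v2 - v) f2' = α21 (f1 - f2)`; consequently the
synchronization system has no traveling-wave solution `m_i(t,x) = f_i(x - v t)`
with such profiles. -/
theorem stmt_12 (v1 v2 α12 α21 : ℝ) (h12 : 0 < α12) (h21 : 0 < α21)
    (hv : v1 ≠ v2) (v : ℝ) :
    ¬ ∃ f1 f2 : ℝ → ℝ,
        ContDiff ℝ 1 f1 ∧ ContDiff ℝ 1 f2 ∧
        (∀ x : ℝ, 0 ≤ f1 x) ∧ (∀ x : ℝ, 0 ≤ f2 x) ∧
        Integrable f1 ∧ Integrable f2 ∧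
        (∫ x : ℝ, f1 x) = 1 ∧ (∫ x : ℝ, f2 x) = 1 ∧
        (∀ x : ℝ, (v1 - v) * deriv f1 x = α12 * (f2 x - f1 x)) ∧
        (∀ x : ℝ, (v2 - v) * deriv f2 x = α21 * (f1 x - f2 x)) := by
  rintro ⟨f1, f2, hc1, hc2, hp1, hp2, hi1, hi2, hI1, hI2, he1, he2⟩
  have hd1 : Differentiable ℝ f1 := hc1.differentiable one_ne_zero
  have hd2 : Differentiable ℝ f2 := hc2.differentiable one_ne_zero
  by_cases h1v : v1 = v
  · -- then f2 = f1 and f2 is constant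
    have heq : ∀ x, f2 x = f1 x := by
      intro x
      have := he1 x
      rw [h1v, sub_self, zero_mul] at this
      have := (mul_eq_zero.mp this.symm).resolve_left (ne_of_gt h12)
      linarith
    have h2v : v2 - v ≠ 0 := by
      intro h; apply hv; rw [h1v]; linarith [sub_eq_zero.mp h]
    have hderiv : ∀ x, deriv f2 x = 0 := by
      intro x
      have := he2 x
      rw [heq x, sub_self, mul_zero] at this
      exact (mul_eq_zero.mp this).resolve_left h2v
    exact const_integrable_false f2 hi2 (fun x => is_const_of_deriv_eq_zero hd2 hderiv x 0) hI2
  · by_cases h2v : v2 = v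
    · -- symmetric
      have heq : ∀ x, f1 x = f2 x := by
        intro x
        have := he2 x
        rw [h2v, sub_self, zero_mul] at this
        have := (mul_eq_zero.mp this.symm).resolve_left (ne_of_gt h21)
        linarith
      have h1v' : v1 - v ≠ 0 := sub_ne_zero.mpr h1v
      have hderiv : ∀ x, deriv f1 x = 0 := by
        intro x
        have := he1 x
        rw [heq x, sub_self, mul_zero] at this
        exact (mul_eq_zero.mp this).resolve_left h1v'
      exact const_integrable_false f1 hi1 (fun x => is_const_of_deriv_eq_zero hd1 hderiv x 0) hI1
    · have h1v' : v1 - v ≠ 0 := sub_ne_zero.mpr h1v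
      have h2v' : v2 - v ≠ 0 := sub_ne_zero.mpr h2v
      set a : ℝ := α12 / (v1 - v) with ha
      set b : ℝ := α21 / (v2 - v) with hb
      have hda : ∀ x, deriv f1 x = a * (f2 x - f1 x) := by
        intro x
        have := he1 x
        rw [ha, div_mul_eq_mul_div, eq_div_iff h1v']
        linarith
      have hdb : ∀ x, deriv f2 x = b * (f1 x - f2 x) := by
        intro x
        have := he2 x
        rw [hb, div_mul_eq_mul_div, eq_div_iff h2v']
        linarith
      set g : ℝ → ℝ := fun x => b * f1 x + a * f2 x with hg
      have hdg : Differentiable ℝ g := ((hd1.const_mul b).add (hd2.const_mul a))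
      have hderivg : ∀ x, deriv g x = 0 := by
        intro x
        have : deriv g x = b * deriv f1 x + a * deriv f2 x := by
          rw [hg]
          rw [show (fun x => b * f1 x + a * f2 x) = (fun y => b * f1 y) + fun y => a * f2 y from rfl]
          rw [deriv_add ((hd1 x).const_mul b) ((hd2 x).const_mul a),
            deriv_const_mul b (hd1 x), deriv_const_mul a (hd2 x)]
        rw [this, hda x, hdb x]; ring
      have hconst : ∀ x, g x = g 0 := fun x => is_const_of_deriv_eq_zero hdg hderivg x 0
      have hig : Integrable g := (hi1.const_mul b).add (hi2.const_mul a)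
      have hg0 : g 0 = 0 := by
        have hg' : g = fun _ => g 0 := funext hconst
        rcases (integrable_const_iff).mp (hg' ▸ hig) with h0 | hfin
        · exact h0
        · simp [isFiniteMeasure_iff, Real.volume_univ] at hfin
      have hIg : (∫ x : ℝ, g x) = b + a := by
        rw [hg]
        rw [integral_add (hi1.const_mul b) (hi2.const_mul a),
          integral_const_mul, integral_const_mul, hI1, hI2]
        ring
      have hIg0 : (∫ x : ℝ, g x) = 0 := by
        have hg' : g = fun _ => g 0 := funext hconst
        rw [hg', hg0]; simp
      have hab : b + a = 0 := by rw [← hIg, hIg0]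
      have hbne : b ≠ 0 := div_ne_zero (ne_of_gt h21) h2v'
      -- g x = 0 everywhere, a = -b, so b*(f1 x - f2 x) = 0, f1 = f2
      have heq : ∀ x, f1 x = f2 x := by
        intro x
        have h0 : b * f1 x + a * f2 x = 0 := by rw [← hg0]; exact (hconst x) ▸ rfl
        have ha' : a = -b := by linarith
        rw [ha'] at h0
        have : b * (f1 x - f2 x) = 0 := by linear_combination h0
        have := (mul_eq_zero.mp this).resolve_left hbne
        linarith
      have hderiv1 : ∀ x, deriv f1 x = 0 := by
        intro x; rw [hda x, heq x, sub_self, mul_zero]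
      exact const_integrable_false f1 hi1 (fun x => is_const_of_deriv_eq_zero hd1 hderiv1 x 0) hI1
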